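/- Let k be a field of characteristic 0 and M a finite-dimensional k((t))-vector space with connection ∂_t. If there exists a nonzero m ∈ M such that the k[[t]][∂_t]-submodule of M generated by m is finitely generated as a k[[t]]-module, then M has a nonzero horizontal section, i.e. ker(∂_t) ≠ 0. -/

import Mathlib

/-- The formal derivative d/dt on the field of formal Laurent series `k((t))`. -/
noncomputable def lderiv {k : Type} [Field k] (f : LaurentSeries k) : LaurentSeries k where
  coeff n := (n + 1 : ℤ) • f.coeff (n + 1)
  isPWO_support' := by
    refine Set.IsPWO.mono (f.isPWO_support.image_of_monotone
      (f := fun n : ℤ => n - 1) (fun a b h => by simpa using h)) ?_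
    intro n hn
    refine ⟨n + 1, ?_, by ring⟩
    intro h
    simp only [Function.mem_support] at hn
    exact hn (by simp [h])

open Finset

section Sol
variable {k : Type} [Field k] {ι : Type} [Fintype ι]

/-- Coefficient recursion for the formal solution of `y' = -A y`. -/
noncomputable def solAux (A : ι → ι → PowerSeries k) (v : ι → k) : ℕ → ℕ → ι → k
  | 0 => fun m => if m = 0 then v else 0
  | (n+1) => fun m =>
      if m ≤ n then solAux A v n m
      else fun i => -((n+1 : k))⁻¹ *
        ∑ q ∈ Finset.range (n+1), ∑ j, PowerSeries.coeff q (A i j) * solAux A v n (n - q) j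

lemma solAux_eq (A : ι → ι → PowerSeries k) (v : ι → k) {m n : ℕ} (h : m ≤ n) :
    solAux A v n m = solAux A v m m := by
  induction n with
  | zero => interval_cases m; rfl
  | succ n ih =>
      rcases eq_or_lt_of_le h with h' | h'
      · subst h'; rfl
      · have hm : m ≤ n := Nat.lt_succ_iff.mp h'
        simp only [solAux, if_pos hm]
        exact ih hm

noncomputable def solC (A : ι → ι → PowerSeries k) (v : ι → k) (n : ℕ) : ι → k :=
  solAux A v n n

noncomputable def solF (A : ι → ι → PowerSeries k) (v : ι → k) (j : ι) : PowerSeries k :=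
  PowerSeries.mk fun n => solC A v n j

@[simp] lemma solC_zero (A : ι → ι → PowerSeries k) (v : ι → k) : solC A v 0 = v := by
  simp [solC, solAux]

lemma solC_succ (A : ι → ι → PowerSeries k) (v : ι → k) (n : ℕ) (i : ι) :
    solC A v (n+1) i = -((n+1 : k))⁻¹ *
      ∑ q ∈ Finset.range (n+1), ∑ j, PowerSeries.coeff q (A i j) * solC A v (n - q) j := by
  show solAux A v (n+1) (n+1) i = _
  simp only [solAux, if_neg (Nat.not_succ_le_self n)]
  congr 1
  refine Finset.sum_congr rfl fun q hq => Finset.sum_congr rfl fun j _ => ?_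
  rw [solAux_eq A v (Nat.sub_le n q)]
  rfl
end Sol

section Key
variable {k : Type} [Field k] {ι : Type} [Fintype ι]

lemma ofPS_coeff_neg (f : PowerSeries k) {n : ℤ} (hn : n < 0) :
    (HahnSeries.ofPowerSeries ℤ k f).coeff n = 0 := by
  rw [HahnSeries.ofPowerSeries_apply]
  apply HahnSeries.embDomain_notin_range
  rintro ⟨m, hm⟩
  simp at hm
  omega

lemma sol_key [CharZero k] (A : ι → ι → PowerSeries k) (v : ι → k) (i : ι) :
    lderiv (HahnSeries.ofPowerSeries ℤ k (solF A v i)) +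
      ∑ j, HahnSeries.ofPowerSeries ℤ k (A i j) *
        HahnSeries.ofPowerSeries ℤ k (solF A v j) = 0 := by
  have hsum : (∑ j, HahnSeries.ofPowerSeries ℤ k (A i j) *
      HahnSeries.ofPowerSeries ℤ k (solF A v j)) =
      HahnSeries.ofPowerSeries ℤ k (∑ j, A i j * solF A v j) := by
    rw [map_sum]
    exact Finset.sum_congr rfl fun j _ => (map_mul _ _ _).symm
  rw [hsum]
  apply HahnSeries.ext
  funext n
  show (n + 1 : ℤ) • (HahnSeries.ofPowerSeries ℤ k (solF A v i)).coeff (n + 1) +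
      (HahnSeries.ofPowerSeries ℤ k (∑ j, A i j * solF A v j)).coeff n = 0
  cases n with
  | ofNat m =>
      have h1 : ((m : ℤ) + 1) = ((m + 1 : ℕ) : ℤ) := by push_cast; ring
      rw [show (Int.ofNat m) = (m : ℤ) from rfl, h1, HahnSeries.ofPowerSeries_apply_coeff,
        HahnSeries.ofPowerSeries_apply_coeff]
      rw [zsmul_eq_mul, Int.cast_natCast]
      rw [map_sum]
      have h2 : ∀ j : ι, PowerSeries.coeff m (A i j * solF A v j) =
          ∑ q ∈ Finset.range (m + 1),
            PowerSeries.coeff q (A i j) * solC A v (m - q) j := by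
        intro j
        rw [PowerSeries.coeff_mul, Finset.Nat.sum_antidiagonal_eq_sum_range_succ_mk]
        exact Finset.sum_congr rfl fun q _ => by rw [solF, PowerSeries.coeff_mk]
      simp only [h2]
      rw [Finset.sum_comm]
      rw [solF, PowerSeries.coeff_mk]
      show ((m + 1 : ℕ) : k) * solC A v (m + 1) i + _ = 0
      rw [solC_succ]
      have h3 : ((m + 1 : ℕ) : k) ≠ 0 := Nat.cast_ne_zero.mpr (Nat.succ_ne_zero m)
      have h3' : ((m : k) + 1) ≠ 0 := by push_cast at h3; exact h3
      push_cast
      rw [neg_mul, mul_neg, mul_inv_cancel_left₀ h3', neg_add_cancel]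
  | negSucc m =>
      have hneg : (Int.negSucc m) < 0 := Int.negSucc_lt_zero m
      rw [ofPS_coeff_neg _ hneg]
      cases m with
      | zero => simp
      | succ m' =>
          have : (Int.negSucc (m' + 1) + 1) < 0 := by
            rw [Int.negSucc_eq]; push_cast; omega
          rw [ofPS_coeff_neg _ this]
          simp
end Key

/-- if a finite-dimensional k((t))-vector space M with connection ∂_t
contains a nonzero ∂_t-stable finitely generated k[[t]]-submodule, then M has a
nonzero horizontal section. -/
theorem stmt8 (k : Type) [Field k] [CharZero k]
    (M : Type) [AddCommGroup M] [Module (LaurentSeries k) M]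
    [FiniteDimensional (LaurentSeries k) M]
    [Module (PowerSeries k) M] [IsScalarTower (PowerSeries k) (LaurentSeries k) M]
    (del : M → M)
    (hadd : ∀ x y : M, del (x + y) = del x + del y)
    (hleib : ∀ (f : LaurentSeries k) (m : M), del (f • m) = lderiv f • m + f • del m)
    (N : Submodule (PowerSeries k) M) (hN : N ≠ ⊥) (hNfg : N.FG)
    (hstab : ∀ x ∈ N, del x ∈ N) :
    ∃ m : M, m ≠ 0 ∧ del m = 0 := by
  classical
  have hinj : Function.Injective (algebraMap (PowerSeries k) (LaurentSeries k)) :=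
    IsFractionRing.injective _ _
  haveI : NoZeroSMulDivisors (PowerSeries k) M := by
    refine ⟨fun {c x} h => ?_⟩
    rcases eq_or_ne c 0 with rfl | hc
    · exact Or.inl rfl
    right
    have h2 : (algebraMap (PowerSeries k) (LaurentSeries k) c) • x = 0 := by
      rwa [algebraMap_smul]
    have hc2 : algebraMap (PowerSeries k) (LaurentSeries k) c ≠ 0 := by
      intro hh
      exact hc (hinj (by rw [hh, map_zero]))
    exact (smul_eq_zero.mp h2).resolve_left hc2
  haveI : Module.Finite (PowerSeries k) N := ⟨(Submodule.fg_top N).mpr hNfg⟩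
  haveI : Module.Free (PowerSeries k) N := Module.free_of_finite_type_torsion_free'
  set ι := Module.Free.ChooseBasisIndex (PowerSeries k) N with hι
  let b : Module.Basis ι (PowerSeries k) N := Module.Free.chooseBasis _ _
  haveI : Nontrivial N := Submodule.nontrivial_iff_ne_bot.mpr hN
  obtain ⟨j0⟩ : Nonempty ι := b.index_nonempty
  let A : ι → ι → PowerSeries k := fun i j => b.repr ⟨del (b j), hstab _ (b j).2⟩ i
  let v : ι → k := Pi.single j0 1
  let F : ι → PowerSeries k := solF A v
  let yN : N := ∑ j, F j • b j
  have h0 : del 0 = 0 := by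
    have h := hadd 0 0
    rw [add_zero] at h
    exact (add_eq_left.mp h.symm)
  have hsum : ∀ (s : Finset ι) (g : ι → M),
      del (∑ j ∈ s, g j) = ∑ j ∈ s, del (g j) := by
    intro s g
    induction s using Finset.induction with
    | empty => simpa using h0
    | insert _ _ hx ih => rw [Finset.sum_insert hx, hadd, ih, Finset.sum_insert hx]
  refine ⟨(yN : M), ?_, ?_⟩
  · intro hzero
    rw [Submodule.coe_eq_zero] at hzero
    have hr : b.repr yN j0 = F j0 := by
      rw [show yN = ∑ j, F j • b j from rfl, b.repr_sum_self]
    rw [hzero] at hr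
    simp only [map_zero, Finsupp.coe_zero, Pi.zero_apply] at hr
    have : PowerSeries.coeff 0 (F j0) = 1 := by
      rw [show F j0 = solF A v j0 from rfl, solF, PowerSeries.coeff_mk, solC_zero]
      simp [v]
    rw [← hr] at this
    simp at this
  · have hyM : (yN : M) = ∑ j, algebraMap (PowerSeries k) (LaurentSeries k) (F j) • (b j : M) := by
      rw [show yN = ∑ j, F j • b j from rfl]
      push_cast [Submodule.coe_sum]
      exact Finset.sum_congr rfl fun j _ => (algebraMap_smul _ _ _).symm
    have hdelb : ∀ j : ι, del (b j : M) =
        ∑ i, algebraMap (PowerSeries k) (LaurentSeries k) (A i j) • (b i : M) := by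
      intro j
      have := b.sum_repr ⟨del (b j), hstab _ (b j).2⟩
      have h2 := congrArg (Submodule.subtype N) this
      simp only [map_sum, Submodule.subtype_apply, Submodule.coe_smul] at h2
      rw [← h2]
      exact Finset.sum_congr rfl fun i _ => by rw [algebraMap_smul]
    rw [hyM, hsum]
    have hterm : ∀ j : ι, del (algebraMap (PowerSeries k) (LaurentSeries k) (F j) • (b j : M)) =
        lderiv (algebraMap (PowerSeries k) (LaurentSeries k) (F j)) • (b j : M) +
        ∑ i, (algebraMap (PowerSeries k) (LaurentSeries k) (A i j) *
          algebraMap (PowerSeries k) (LaurentSeries k) (F j)) • (b i : M) := by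
      intro j
      rw [hleib, hdelb, Finset.smul_sum]
      congr 1
      exact Finset.sum_congr rfl fun i _ => by rw [smul_smul, mul_comm]
    simp only [hterm]
    rw [Finset.sum_add_distrib, Finset.sum_comm, ← Finset.sum_add_distrib]
    refine Finset.sum_eq_zero fun i _ => ?_
    rw [← Finset.sum_smul, ← add_smul]
    have hk := sol_key A v i
    rw [LaurentSeries.coe_algebraMap]
    rw [show (solF A v i) = F i from rfl] at hk
    have hk2 : lderiv (HahnSeries.ofPowerSeries ℤ k (F i)) +
        ∑ j, HahnSeries.ofPowerSeries ℤ k (A i j) *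
          HahnSeries.ofPowerSeries ℤ k (F j) = 0 := hk
    rw [hk2, zero_smul]
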